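/- Let 𝔄 and 𝔅 be real symmetric positive definite 2×2 matrices, and suppose E is a real symmetric 2×2 matrix satisfying E𝔅E = 𝔄 and such that 𝔅E is diagonalizable with positive eigenvalues. Then E is positive definite. -/

import Mathlib

open scoped Matrix


theorem stmt_4 (A B E : Matrix (Fin 2) (Fin 2) ℝ)
    (hA : A.IsSymm) (hB : B.IsSymm) (hApd : A.PosDef) (hBpd : B.PosDef)
    (hE : E.IsSymm) (hEBE : E * B * E = A)
    (hdiag : ∃ (P : Matrix (Fin 2) (Fin 2) ℝ) (d : Fin 2 → ℝ),
      IsUnit P.det ∧ (∀ i, 0 < d i) ∧ B * E = P * Matrix.diagonal d * P⁻¹) :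
    E.PosDef := by
  obtain ⟨P, d, hPu, hd, hBE⟩ := hdiag
  have hPdet : P.det ≠ 0 := hPu.ne_zero
  -- determinant of E is positive
  have hdetBE : (B * E).det = d 0 * d 1 := by
    rw [hBE, Matrix.det_mul, Matrix.det_mul, Matrix.det_nonsing_inv,
      Matrix.det_diagonal, Fin.prod_univ_two]
    simp only [Ring.inverse_eq_inv']
    field_simp
  have hdetB : 0 < B.det := hBpd.det_pos
  have hdetE : 0 < E.det := by
    have h1 : B.det * E.det = d 0 * d 1 := by rw [← Matrix.det_mul]; exact hdetBE
    have h2 : 0 < d 0 * d 1 := mul_pos (hd 0) (hd 1)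
    nlinarith
  -- eigenvector of B*E with eigenvalue d 0
  obtain ⟨v, hv⟩ : ∃ v : Fin 2 → ℝ, v = fun i => P i 0 := ⟨_, rfl⟩
  have hvP : v = P *ᵥ Pi.single 0 1 := by
    funext i
    simp [hv, Matrix.mulVec, dotProduct, Fin.sum_univ_two, Pi.single_apply]
  have hvne : v ≠ 0 := by
    intro h0
    have : (P⁻¹ * P) *ᵥ Pi.single 0 1 = (0 : Fin 2 → ℝ) := by
      rw [← Matrix.mulVec_mulVec, ← hvP, h0, Matrix.mulVec_zero]
    rw [Matrix.nonsing_inv_mul P hPu, Matrix.one_mulVec] at this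
    have := congrFun this 0
    simp at this
  have heig : (B * E) *ᵥ v = d 0 • v := by
    have h1 : (B * E) * P = P * Matrix.diagonal d := by
      rw [hBE, Matrix.mul_assoc, Matrix.nonsing_inv_mul P hPu, Matrix.mul_one]
    have h2 : Pi.single (0 : Fin 2) (d 0 * 1) = d 0 • (Pi.single 0 1 : Fin 2 → ℝ) := by
      funext i
      by_cases hi : i = 0 <;> simp [Pi.single_apply, hi]
    rw [hvP, Matrix.mulVec_mulVec, h1, ← Matrix.mulVec_mulVec,
      Matrix.diagonal_mulVec_single, h2, Matrix.mulVec_smul]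
  -- v ⬝ E v = d 0 * (v ⬝ B⁻¹ v) > 0
  have hBinv : (B⁻¹).PosDef := hBpd.inv
  have hEv : E *ᵥ v = d 0 • (B⁻¹ *ᵥ v) := by
    have h1 : B⁻¹ *ᵥ ((B * E) *ᵥ v) = B⁻¹ *ᵥ (d 0 • v) := by rw [heig]
    rwa [Matrix.mulVec_mulVec, ← Matrix.mul_assoc, Matrix.nonsing_inv_mul B
      hBpd.det_pos.ne'.isUnit, Matrix.one_mul, Matrix.mulVec_smul] at h1
  have hQv : 0 < v ⬝ᵥ E *ᵥ v := by
    rw [hEv, dotProduct_smul, smul_eq_mul]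
    have := (Matrix.posDef_iff_dotProduct_mulVec.mp hBinv).2 hvne
    simp only [star_trivial] at this
    exact mul_pos (hd 0) this
  -- coordinates
  set a : ℝ := E 0 0 with hae
  set b : ℝ := E 0 1 with hbe
  set c : ℝ := E 1 1 with hce
  have hE10 : E 1 0 = b := hE.apply 0 1
  have hdet2 : 0 < a * c - b * b := by
    have := Matrix.det_fin_two E
    rw [hE10] at this
    rw [this] at hdetE
    linarith
  have hQv' : 0 < a * v 0 * v 0 + b * v 0 * v 1 + b * v 1 * v 0 + c * v 1 * v 1 := by
    have : v ⬝ᵥ E *ᵥ v =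
        a * v 0 * v 0 + b * v 0 * v 1 + b * v 1 * v 0 + c * v 1 * v 1 := by
      simp [dotProduct, Matrix.mulVec, Fin.sum_univ_two, hE10, ← hae, ← hbe, ← hce]
      ring
    linarith [hQv, this ▸ hQv]
  have ha : 0 < a := by
    rcases lt_trichotomy a 0 with h | h | h
    · nlinarith [sq_nonneg (a * v 0 + b * v 1), mul_pos (neg_pos.2 h) hQv',
        mul_nonneg hdet2.le (mul_self_nonneg (v 1))]
    · rw [h] at hdet2
      nlinarith [sq_nonneg b]
    · exact h
  refine Matrix.posDef_iff_dotProduct_mulVec.mpr ⟨?_, ?_⟩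
  · rw [Matrix.IsHermitian, Matrix.conjTranspose_eq_transpose_of_trivial]
    exact hE
  · intro x hx
    have hx01 : x 0 ≠ 0 ∨ x 1 ≠ 0 := by
      by_contra h
      push_neg at h
      apply hx
      funext i
      fin_cases i <;> simp [h.1, h.2]
    have hQx : star x ⬝ᵥ E *ᵥ x =
        a * x 0 * x 0 + b * x 0 * x 1 + b * x 1 * x 0 + c * x 1 * x 1 := by
      simp [dotProduct, Matrix.mulVec, Fin.sum_univ_two, hE10, ← hae, ← hbe, ← hce]
      ring
    rw [hQx]
    rcases hx01 with h | h
    · rcases eq_or_ne (x 1) 0 with h1 | h1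
      · have h2 : 0 < x 0 * x 0 := mul_self_pos.mpr h
        simp only [h1, mul_zero, zero_mul, add_zero]
        nlinarith [mul_pos ha h2]
      · have h2 : 0 < x 1 * x 1 := mul_self_pos.mpr h1
        nlinarith [sq_nonneg (a * x 0 + b * x 1), mul_pos hdet2 h2]
    · have h2 : 0 < x 1 * x 1 := mul_self_pos.mpr h
      nlinarith [sq_nonneg (a * x 0 + b * x 1), mul_pos hdet2 h2]
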